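/- Space-time Kalikow-type decomposition. Assume sup_i ∑_j |W_{j→i}| < ∞, the uniform Lipschitz condition on φ with constant γ, and sup_i ∑_{k≥0}(k+1)|V_i(k)|(∑_{j∉V_i(k−1)}|W_{j→i}|∑_{n≥1} g_j(n) + ∑_{j∈V_i(k−1)}|W_{j→i}|∑_{n≥k∨1} g_j(n)) < 1/γ. Then for every i ∈ I the quantities λ_i(k) defined in the context satisfy λ_i(k) ∈ [0,1] for all k ≥ −1 and ∑_{k≥−1} λ_i(k) = 1. Moreover, for every (i,t) there exists a family of conditional probabilities (p_{(i,t)}^{[k]}(a|x))_{k≥0} such that: (1) x ↦ p_{(i,t)}^{[0]}(a|x) depends only on x_{t−1}(i); (2) for k ≥ 1, x ↦ p_{(i,t)}^{[k]}(a|x) depends only on (x_s(j) : t−k−1 ≤ s ≤ t−1, j ∈ V_i(k)); (3) p_{(i,t)}^{[k]}(1|x) ∈ [0,1] and p_{(i,t)}^{[k]}(0|x) + p_{(i,t)}^{[k]}(1|x) = 1 for all x, k ≥ 0; (4) for all x ∈ {0,1}^{I×ℤ} and a ∈ {0,1}: p_{(i,t)}(a|x) = λ_i(−1)·p_{(i,t)}^{[−1]}(a)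 + ∑_{k≥0} λ_i(k)·p_{(i,t)}^{[k]}(a|x), where p_{(i,t)}^{[−1]}(a) = r_i^{[−1]}(a)/λ_i(−1). -/

import Mathlib

open MeasureTheory Filter Set
open scoped ENNReal

noncomputable section

namespace NeuronSys

variable {I : Type*}

/-- The accumulated, weighted spiking activity felt by neuron `i` at time `t`:
`∑_j W_{j→i} ∑_{s = L_t^i}^{t-1} g_j(t-s) x_s(j)`, where the inner sum ranges over
those `s < t` such that neuron `i` has no spike strictly between `s` and `t`
(equivalently `L_t^i(x) ≤ s ≤ t-1`; if `i` never spiked before `t`, over all `s < t`). -/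
noncomputable def pot (W : I → I → ℝ) (g : I → ℕ → ℝ) (i : I) (t : ℤ)
    (x : ℤ → I → Bool) : ℝ :=
  ∑' (j : I) (s : ℤ),
    if s < t ∧ (∀ u : ℤ, s < u → u < t → x u i = false) ∧ x s j = true
    then W j i * g j (t - s).toNat else 0

/-- The last spike time `L_t^i(x) = sup {s < t : x_s(i) = 1}` (junk value if no spike). -/
noncomputable def lastSpike (x : ℤ → I → Bool) (i : I) (t : ℤ) : ℤ :=
  sSup {s : ℤ | s < t ∧ x s i = true}

/-- The spiking probability of neuron `i` at time `t` given the past `x`, for a spiking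
rate `φ_i(s, n)` depending also on the time `n = t - L_t^i` elapsed since the last spike. -/
noncomputable def spikeP (φ : I → ℝ → ℕ → ℝ) (W : I → I → ℝ) (g : I → ℕ → ℝ)
    (i : I) (t : ℤ) (x : ℤ → I → Bool) : ℝ :=
  φ i (pot W g i t x) (t - lastSpike x i t).toNat

/-- The filtration `F_t = σ(X_s(j) : j ∈ I, s ≤ t)` on `{0,1}^{I × ℤ}`. -/
def filt (I : Type*) (t : ℤ) : MeasurableSpace (ℤ → I → Bool) :=
  MeasurableSpace.comap (fun x (p : {s : ℤ // s ≤ t} × I) => x p.1.1 p.2)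
    MeasurableSpace.pi

/-- `P` is compatible with the dynamics: conditionally on `F_{t-1}` the coordinates
`(X_t(i))_{i∈I}` are independent, with `P(X_t(i) = 1 | F_{t-1}) = φ_i(potential, t - L_t^i)`. -/
def Compatible (φ : I → ℝ → ℕ → ℝ) (W : I → I → ℝ) (g : I → ℕ → ℝ)
    (P : Measure (ℤ → I → Bool)) : Prop :=
  ∀ (t : ℤ) (J : Finset I) (a : I → Bool),
    (P[(fun x => ∏ i ∈ J, (if x t i = a i then (1:ℝ) else 0)) | filt I (t-1)])
      =ᵐ[P] (fun x => ∏ i ∈ J,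
        (if a i then spikeP φ W g i t x else 1 - spikeP φ W g i t x))

/-- `G(n) = sup_i ∑_{m=1}^n g_i(m)`, as an extended real. -/
noncomputable def Gfun (g : I → ℕ → ℝ) (n : ℕ) : ℝ≥0∞ :=
  ⨆ i : I, ∑ m ∈ Finset.Icc 1 n, ENNReal.ofReal (g i m)

end NeuronSys

namespace NeuronSys

variable {I : Type*}

/-- Spiking probability when the rate `φ_i(s)` does not depend on the elapsed time. -/
noncomputable def spikePS (φ : I → ℝ → ℝ) (W : I → I → ℝ) (g : I → ℕ → ℝ)
    (i : I) (t : ℤ) (x : ℤ → I → Bool) : ℝ :=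
  φ i (pot W g i t x)

/-- Compatibility of `P` with the dynamics when `φ_i(s)` does not depend on
the elapsed time since the last spike. -/
def CompatibleS (φ : I → ℝ → ℝ) (W : I → I → ℝ) (g : I → ℕ → ℝ)
    (P : Measure (ℤ → I → Bool)) : Prop :=
  ∀ (t : ℤ) (J : Finset I) (a : I → Bool),
    (P[(fun x => ∏ i ∈ J, (if x t i = a i then (1:ℝ) else 0)) | filt I (t-1)])
      =ᵐ[P] (fun x => ∏ i ∈ J,
        (if a i then spikePS φ W g i t x else 1 - spikePS φ W g i t x))

end NeuronSys

namespace NeuronSys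

variable {I : Type*}

/-- `p_{(i,t)}(a|x)` when the spiking rate does not depend on the elapsed time. -/
noncomputable def pcondS (φ : I → ℝ → ℝ) (W : I → I → ℝ) (g : I → ℕ → ℝ)
    (i : I) (t : ℤ) (a : Bool) (x : ℤ → I → Bool) : ℝ :=
  if a then spikePS φ W g i t x else 1 - spikePS φ W g i t x

/-- `r_i^{[-1]}(a) = inf {p_{(i,0)}(a|z) : z ∈ S}`. -/
noncomputable def rnegS (φ : I → ℝ → ℝ) (W : I → I → ℝ) (g : I → ℕ → ℝ)
    (i : I) (a : Bool) : ℝ :=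
  sInf (Set.range (fun z => pcondS φ W g i 0 a z))

/-- `r_i^{[k]}(a|x) = inf {p_{(i,0)}(a|z) : z ∈ S, z = x on V_i(k) × [-k-1, -1]}`
(for `k = 0` this is the condition `z_{-1}(i) = x_{-1}(i)`, since `V_i(0) = {i}`). -/
noncomputable def rkS (φ : I → ℝ → ℝ) (W : I → I → ℝ) (g : I → ℕ → ℝ)
    (V : I → ℕ → Finset I) (i : I) (k : ℕ) (a : Bool) (x : ℤ → I → Bool) : ℝ :=
  sInf {v | ∃ z : ℤ → I → Bool,
    (∀ j ∈ V i k, ∀ s : ℤ, -(k : ℤ) - 1 ≤ s → s ≤ -1 → z s j = x s j) ∧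
    v = pcondS φ W g i 0 a z}

/-- `λ_i(-1) = α_i(-1) = r_i^{[-1]}(1) + r_i^{[-1]}(0)`. -/
noncomputable def lamNegS (φ : I → ℝ → ℝ) (W : I → I → ℝ) (g : I → ℕ → ℝ) (i : I) : ℝ :=
  rnegS φ W g i true + rnegS φ W g i false

/-- `α_i(k) = inf_x (r_i^{[k]}(1|x) + r_i^{[k]}(0|x))`. -/
noncomputable def alpS (φ : I → ℝ → ℝ) (W : I → I → ℝ) (g : I → ℕ → ℝ)
    (V : I → ℕ → Finset I) (i : I) (k : ℕ) : ℝ :=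
  sInf (Set.range (fun x => rkS φ W g V i k true x + rkS φ W g V i k false x))

/-- `λ_i(k) = α_i(k) - α_i(k-1)` for `k ≥ 0`. -/
noncomputable def lamS (φ : I → ℝ → ℝ) (W : I → I → ℝ) (g : I → ℕ → ℝ)
    (V : I → ℕ → Finset I) (i : I) : ℕ → ℝ
  | 0 => alpS φ W g V i 0 - lamNegS φ W g i
  | k + 1 => alpS φ W g V i (k + 1) - alpS φ W g V i k

end NeuronSys

open NeuronSys

namespace KalAux


def eZ (n : ℕ) : ℤ := -((n : ℤ) + 1)

lemma eZ_inj : Function.Injective eZ := by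
  intro a b h
  simp only [eZ, neg_inj, add_left_inj, Nat.cast_inj] at h
  exact h

lemma eZ_range : Set.range eZ = {s : ℤ | s ≤ -1} := by
  ext s
  constructor
  · rintro ⟨n, rfl⟩; simp only [eZ, mem_setOf_eq]; omega
  · intro hs
    simp only [mem_setOf_eq] at hs
    exact ⟨(-s - 1).toNat, by simp only [eZ]; omega⟩

lemma eZ_le (n : ℕ) : eZ n ≤ -1 := by simp only [eZ]; omega

lemma eZ_toNat (n : ℕ) : (-(eZ n)).toNat = n + 1 := by simp only [eZ]; omega

lemma summable_wg {g : ℕ → ℝ} (hg : Summable g) (c : ℝ) :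
    Summable (fun s : ℤ => if s ≤ -1 then c * g (-s).toNat else 0) := by
  rw [← Function.Injective.summable_iff eZ_inj]
  · have : (fun n : ℕ => c * g (n + 1)) = (fun s : ℤ => if s ≤ -1 then c * g (-s).toNat else 0) ∘ eZ := by
      funext n
      simp [Function.comp, eZ_le n, eZ_toNat n]
    rw [← this]
    exact ((summable_nat_add_iff 1).2 hg).mul_left c
  · intro s hs
    rw [eZ_range] at hs
    simp only [mem_setOf_eq] at hs
    simp [if_neg hs]



section PartB

variable {I : Type*} (W : I → I → ℝ) (g : I → ℕ → ℝ) (i : I)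

/-- summand of `pot` at time 0 -/
def fterm (x : ℤ → I → Bool) (j : I) (s : ℤ) : ℝ :=
  if s < 0 ∧ (∀ u : ℤ, s < u → u < 0 → x u i = false) ∧ x s j = true
  then W j i * g j (0 - s).toNat else 0

lemma pot_eq (x : ℤ → I → Bool) :
    NeuronSys.pot W g i 0 x = ∑' (j : I) (s : ℤ), fterm W g i x j s := rfl

def wg (j : I) (s : ℤ) : ℝ := if s ≤ -1 then |W j i| * g j (-s).toNat else 0

lemma abs_fterm_le (hgpos : ∀ j n, 0 ≤ g j n) (x : ℤ → I → Bool) (j : I) (s : ℤ) :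
    |fterm W g i x j s| ≤ wg W g i j s := by
  unfold fterm wg
  by_cases hs : s ≤ -1
  · rw [if_pos hs]
    split
    · rw [abs_mul, zero_sub, abs_of_nonneg (hgpos j _)]
    · simpa using mul_nonneg (abs_nonneg (W j i)) (hgpos j (-s).toNat)
  · rw [if_neg hs, if_neg]
    · simp
    · rintro ⟨h1, -⟩; omega

lemma summable_wg' (hg : ∀ j, Summable (g j)) (j : I) : Summable (wg W g i j) :=
  summable_wg (hg j) _

lemma summable_fterm (hg : ∀ j, Summable (g j)) (hgpos : ∀ j n, 0 ≤ g j n)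
    (x : ℤ → I → Bool) (j : I) : Summable (fterm W g i x j) := by
  apply Summable.of_abs
  exact (summable_wg' W g i hg j).of_nonneg_of_le (fun s => abs_nonneg _)
    (abs_fterm_le W g i hgpos x j)

def SG (j : I) : ℝ := ∑' n : ℕ, g j (n + 1)

lemma tsum_wg (j : I) : ∑' s : ℤ, wg W g i j s = |W j i| * SG g j := by
  have hsup : Function.support (wg W g i j) ⊆ Set.range eZ := by
    intro s hs
    rw [eZ_range]
    simp only [Function.mem_support, wg] at hs
    by_contra h
    simp only [mem_setOf_eq, not_le] at h
    exact hs (if_neg (by omega))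
  rw [← Function.Injective.tsum_eq eZ_inj hsup, SG, ← tsum_mul_left]
  apply tsum_congr
  intro n
  simp [wg, eZ_le n, eZ_toNat n]

def innr (x : ℤ → I → Bool) (j : I) : ℝ := ∑' s : ℤ, fterm W g i x j s

lemma abs_innr_le (hg : ∀ j, Summable (g j)) (hgpos : ∀ j n, 0 ≤ g j n)
    (x : ℤ → I → Bool) (j : I) : |innr W g i x j| ≤ |W j i| * SG g j := by
  have hS : Summable (fun s => |fterm W g i x j s|) :=
    (summable_wg' W g i hg j).of_nonneg_of_le (fun s => abs_nonneg _)
      (abs_fterm_le W g i hgpos x j)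
  rw [← tsum_wg W g i j]
  have h1 : ‖∑' s, fterm W g i x j s‖ ≤ ∑' s, ‖fterm W g i x j s‖ :=
    norm_tsum_le_tsum_norm (f := fterm W g i x j)
      (by simpa only [Real.norm_eq_abs] using hS)
  calc |innr W g i x j| ≤ ∑' s, |fterm W g i x j s| := by
        simpa only [Real.norm_eq_abs, innr] using h1
    _ ≤ ∑' s, wg W g i j s := Summable.tsum_le_tsum (abs_fterm_le W g i hgpos x j) hS
        (summable_wg' W g i hg j)

def WE (j : I) : ℝ≥0∞ := ENNReal.ofReal |W j i|

def gE (j : I) (n : ℕ) : ℝ≥0∞ := ENNReal.ofReal (g j n)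

def GE (j : I) : ℝ≥0∞ := ∑' n : ℕ, if 1 ≤ n then gE g j n else 0

def TE (j : I) (m : ℕ) : ℝ≥0∞ := ∑' n : ℕ, if m ≤ n then gE g j n else 0

lemma GE_eq (j : I) : GE g j = ∑' n : ℕ, gE g j (n + 1) := by
  have hsup : Function.support (fun n : ℕ => if 1 ≤ n then gE g j n else 0) ⊆
      Set.range Nat.succ := by
    intro n hn
    match n with
    | 0 => simp at hn
    | m + 1 => exact ⟨m, rfl⟩
  rw [GE, ← Function.Injective.tsum_eq Nat.succ_injective hsup]
  apply tsum_congr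
  intro n
  simp [Nat.succ_eq_add_one]

lemma ofReal_SG (hg : ∀ j, Summable (g j)) (hgpos : ∀ j n, 0 ≤ g j n) (j : I) :
    ENNReal.ofReal (SG g j) = GE g j := by
  rw [SG, GE_eq, ENNReal.ofReal_tsum_of_nonneg (fun n => hgpos j (n + 1))
    ((summable_nat_add_iff 1).2 (hg j))]
  rfl

def CW : ℝ≥0∞ := ∑' j : I, WE W i j * GE g j

lemma abs_innr_le' (hg : ∀ j, Summable (g j)) (hgpos : ∀ j n, 0 ≤ g j n)
    (hCW : CW W g i ≠ ⊤) (x : ℤ → I → Bool) (j : I) :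
    |innr W g i x j| ≤ (WE W i j * GE g j).toReal := by
  refine (abs_innr_le W g i hg hgpos x j).trans (le_of_eq ?_)
  have hne : WE W i j * GE g j ≠ ⊤ := by
    intro h
    exact hCW (by simpa [h, CW] using ENNReal.le_tsum (f := fun j => WE W i j * GE g j) j)
  rw [← ofReal_SG g hg hgpos j, WE, ← ENNReal.ofReal_mul (abs_nonneg _),
    ENNReal.toReal_ofReal (mul_nonneg (abs_nonneg _) (by
      rw [SG]; exact tsum_nonneg (fun n => hgpos j (n+1))))]

lemma summable_innr (hg : ∀ j, Summable (g j)) (hgpos : ∀ j n, 0 ≤ g j n)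
    (hCW : CW W g i ≠ ⊤) (x : ℤ → I → Bool) : Summable (innr W g i x) := by
  apply Summable.of_abs
  exact (ENNReal.summable_toReal hCW).of_nonneg_of_le (fun j => abs_nonneg _)
    (abs_innr_le' W g i hg hgpos hCW x)

lemma pot_eq_innr (x : ℤ → I → Bool) : NeuronSys.pot W g i 0 x = ∑' j, innr W g i x j := rfl

end PartB


section PartC

variable {I : Type*} [DecidableEq I] (W : I → I → ℝ) (g : I → ℕ → ℝ)
  (V : I → ℕ → Finset I) (i : I)

/-- bracket bound at stage `k` -/
def brE (k : ℕ) : ℝ≥0∞ :=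
  ∑' j : I, (if j ∈ V i k then WE W i j * TE g j (k + 1) else WE W i j * GE g j)

lemma ofReal_wg (j : I) (s : ℤ) :
    ENNReal.ofReal (wg W g i j s) = if s ≤ -1 then WE W i j * gE g j (-s).toNat else 0 := by
  unfold wg WE gE
  split
  · exact ENNReal.ofReal_mul (abs_nonneg _)
  · exact ENNReal.ofReal_zero

lemma abs_fterm_sub_le (hgpos : ∀ j n, 0 ≤ g j n) (x z : ℤ → I → Bool) (j : I) (s : ℤ) :
    |fterm W g i z j s - fterm W g i x j s| ≤ wg W g i j s := by
  by_cases hs : s ≤ -1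
  · have hwg : wg W g i j s = |W j i * g j (0 - s).toNat| := by
      rw [wg, if_pos hs, abs_mul, abs_of_nonneg (hgpos j _), zero_sub]
    unfold fterm
    split <;> split <;> simp [hwg] <;> positivity
  · have h0 : ∀ y : ℤ → I → Bool, fterm W g i y j s = 0 := by
      intro y; rw [fterm, if_neg]; rintro ⟨a, -⟩; omega
    rw [h0, h0, sub_self, abs_zero, wg, if_neg hs]

lemma tsum_FE (j : I) :
    ∑' s : ℤ, (if s ≤ -1 then WE W i j * gE g j (-s).toNat else 0) = WE W i j * GE g j := by
  have hsup : Function.support (fun s : ℤ => if s ≤ -1 then WE W i j * gE g j (-s).toNat else 0)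
      ⊆ Set.range eZ := by
    intro s hs
    rw [eZ_range]
    simp only [Function.mem_support] at hs
    by_contra h
    simp only [mem_setOf_eq, not_le] at h
    exact hs (if_neg (by omega))
  rw [← Function.Injective.tsum_eq eZ_inj hsup]
  have : ∀ n : ℕ, (if eZ n ≤ -1 then WE W i j * gE g j (-(eZ n)).toNat else 0)
      = WE W i j * gE g j (n + 1) := by
    intro n
    rw [if_pos (eZ_le n), eZ_toNat n]
  rw [tsum_congr this, ENNReal.tsum_mul_left, ← GE_eq]

lemma tsum_FE' (k : ℕ) (j : I) :
    ∑' s : ℤ, (if s ≤ -(k : ℤ) - 2 then WE W i j * gE g j (-s).toNat else 0)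
      ≤ WE W i j * TE g j (k + 1) := by
  have hsup : Function.support
      (fun s : ℤ => if s ≤ -(k : ℤ) - 2 then WE W i j * gE g j (-s).toNat else 0)
      ⊆ Set.range eZ := by
    intro s hs
    rw [eZ_range]
    simp only [Function.mem_support] at hs
    by_contra h
    simp only [mem_setOf_eq, not_le] at h
    exact hs (if_neg (by omega))
  rw [← Function.Injective.tsum_eq eZ_inj hsup]
  calc ∑' n : ℕ, (if eZ n ≤ -(k : ℤ) - 2 then WE W i j * gE g j (-(eZ n)).toNat else 0)
      ≤ ∑' n : ℕ, WE W i j * (if k + 1 ≤ n + 1 then gE g j (n + 1) else 0) := by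
        apply ENNReal.tsum_le_tsum
        intro n
        by_cases hn : eZ n ≤ -(k : ℤ) - 2
        · rw [if_pos hn, eZ_toNat n, if_pos (by simp only [eZ] at hn; omega)]
        · rw [if_neg hn]
          exact zero_le
    _ = WE W i j * ∑' n : ℕ, (if k + 1 ≤ n + 1 then gE g j (n + 1) else 0) :=
        ENNReal.tsum_mul_left
    _ ≤ WE W i j * ∑' n : ℕ, (if k + 1 ≤ n then gE g j n else 0) := by
        apply mul_le_mul_right
        exact ENNReal.tsum_comp_le_tsum_of_injective Nat.succ_injective
          (fun n => if k + 1 ≤ n then gE g j n else 0)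
    _ = WE W i j * TE g j (k + 1) := rfl

lemma fterm_eq_of_agree (hV0 : ∀ i, V i 0 = {i}) (hVmono : ∀ i, Monotone (V i))
    (k : ℕ) (x z : ℤ → I → Bool)
    (hagree : ∀ j ∈ V i k, ∀ s : ℤ, -(k : ℤ) - 1 ≤ s → s ≤ -1 → z s j = x s j)
    (j : I) (hj : j ∈ V i k) (s : ℤ) (hs1 : -(k : ℤ) - 1 ≤ s) (hs2 : s ≤ -1) :
    fterm W g i z j s = fterm W g i x j s := by
  have hi : i ∈ V i k := by
    have := hVmono i (Nat.zero_le k)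
    rw [hV0 i] at this
    exact this (Finset.mem_singleton_self i)
  unfold fterm
  refine if_congr ?_ rfl rfl
  have hz : z s j = x s j := hagree j hj s hs1 hs2
  have hu : ∀ u : ℤ, s < u → u < 0 → z u i = x u i := by
    intro u h1 h2
    exact hagree i hi u (by omega) (by omega)
  constructor <;> intro ⟨a, b, c⟩
  · exact ⟨a, fun u h1 h2 => (hu u h1 h2).symm.trans (b u h1 h2), hz.symm.trans c⟩
  · exact ⟨a, fun u h1 h2 => (hu u h1 h2).trans (b u h1 h2), hz.trans c⟩

end PartC


section PartD

variable {I : Type*} [DecidableEq I] (W : I → I → ℝ) (g : I → ℕ → ℝ)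
  (V : I → ℕ → Finset I) (i : I)

lemma innr_diff_le (hg : ∀ j, Summable (g j)) (hgpos : ∀ j n, 0 ≤ g j n)
    (hV0 : ∀ i, V i 0 = {i}) (hVmono : ∀ i, Monotone (V i)) (k : ℕ) (x z : ℤ → I → Bool)
    (hagree : ∀ j ∈ V i k, ∀ s : ℤ, -(k : ℤ) - 1 ≤ s → s ≤ -1 → z s j = x s j) (j : I) :
    ENNReal.ofReal |innr W g i z j - innr W g i x j|
      ≤ (if j ∈ V i k then WE W i j * TE g j (k + 1) else WE W i j * GE g j) := by
  have hsz := summable_fterm W g i hg hgpos z j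
  have hsx := summable_fterm W g i hg hgpos x j
  have habs : Summable (fun s => |fterm W g i z j s - fterm W g i x j s|) := (hsz.sub hsx).abs
  have hstep1 : |innr W g i z j - innr W g i x j|
      ≤ ∑' s, |fterm W g i z j s - fterm W g i x j s| := by
    rw [innr, innr, ← Summable.tsum_sub hsz hsx]
    have := norm_tsum_le_tsum_norm (f := fun s => fterm W g i z j s - fterm W g i x j s)
      (by simpa only [Real.norm_eq_abs] using habs)
    simpa only [Real.norm_eq_abs] using this
  have hstep2 : ENNReal.ofReal |innr W g i z j - innr W g i x j|
      ≤ ∑' s : ℤ, ENNReal.ofReal |fterm W g i z j s - fterm W g i x j s| := by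
    refine (ENNReal.ofReal_le_ofReal hstep1).trans (le_of_eq ?_)
    exact ENNReal.ofReal_tsum_of_nonneg (fun s => abs_nonneg _) habs
  refine hstep2.trans ?_
  by_cases hj : j ∈ V i k
  · rw [if_pos hj]
    refine le_trans ?_ (tsum_FE' W g i k j)
    apply ENNReal.tsum_le_tsum
    intro s
    by_cases hs2 : s ≤ -(k : ℤ) - 2
    · rw [if_pos hs2]
      refine (ENNReal.ofReal_le_ofReal (abs_fterm_sub_le W g i hgpos x z j s)).trans ?_
      rw [ofReal_wg, if_pos (by omega : s ≤ -1)]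
    · rw [if_neg hs2]
      by_cases hs1 : s ≤ -1
      · rw [fterm_eq_of_agree W g V i hV0 hVmono k x z hagree j hj s (by omega) hs1,
          sub_self, abs_zero, ENNReal.ofReal_zero]
      · refine (ENNReal.ofReal_le_ofReal (abs_fterm_sub_le W g i hgpos x z j s)).trans ?_
        rw [ofReal_wg, if_neg hs1]
  · rw [if_neg hj, ← tsum_FE W g i j]
    apply ENNReal.tsum_le_tsum
    intro s
    refine (ENNReal.ofReal_le_ofReal (abs_fterm_sub_le W g i hgpos x z j s)).trans ?_
    rw [ofReal_wg]

lemma pot_diff_le (hg : ∀ j, Summable (g j)) (hgpos : ∀ j n, 0 ≤ g j n)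
    (hCW : CW W g i ≠ ⊤) (hV0 : ∀ i, V i 0 = {i}) (hVmono : ∀ i, Monotone (V i))
    (k : ℕ) (x z : ℤ → I → Bool)
    (hagree : ∀ j ∈ V i k, ∀ s : ℤ, -(k : ℤ) - 1 ≤ s → s ≤ -1 → z s j = x s j) :
    ENNReal.ofReal |NeuronSys.pot W g i 0 z - NeuronSys.pot W g i 0 x| ≤ brE W g V i k := by
  have hsz := summable_innr W g i hg hgpos hCW z
  have hsx := summable_innr W g i hg hgpos hCW x
  have habs : Summable (fun j => |innr W g i z j - innr W g i x j|) := (hsz.sub hsx).abs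
  have hstep1 : |NeuronSys.pot W g i 0 z - NeuronSys.pot W g i 0 x|
      ≤ ∑' j, |innr W g i z j - innr W g i x j| := by
    rw [pot_eq_innr, pot_eq_innr, ← Summable.tsum_sub hsz hsx]
    have := norm_tsum_le_tsum_norm (f := fun j => innr W g i z j - innr W g i x j)
      (by simpa only [Real.norm_eq_abs] using habs)
    simpa only [Real.norm_eq_abs] using this
  calc ENNReal.ofReal |NeuronSys.pot W g i 0 z - NeuronSys.pot W g i 0 x|
      ≤ ∑' j : I, ENNReal.ofReal |innr W g i z j - innr W g i x j| := by
        refine (ENNReal.ofReal_le_ofReal hstep1).trans (le_of_eq ?_)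
        exact ENNReal.ofReal_tsum_of_nonneg (fun j => abs_nonneg _) habs
    _ ≤ brE W g V i k := by
        rw [brE]
        exact ENNReal.tsum_le_tsum
          (innr_diff_le W g V i hg hgpos hV0 hVmono k x z hagree)

end PartD


section PartE

open NeuronSys

variable {I : Type*} (φ : I → ℝ → ℝ) (W : I → I → ℝ) (g : I → ℕ → ℝ)
  (V : I → ℕ → Finset I) (i : I)

lemma pot_shift (t : ℤ) (x : ℤ → I → Bool) :
    pot W g i t x = pot W g i 0 (fun s j => x (s + t) j) := by
  unfold pot
  refine tsum_congr fun j => ?_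
  have heq := Equiv.tsum_eq (Equiv.addRight t)
    (fun s : ℤ => if s < t ∧ (∀ u : ℤ, s < u → u < t → x u i = false) ∧ x s j = true
      then W j i * g j (t - s).toNat else 0)
  rw [← heq]
  refine tsum_congr fun s => ?_
  simp only [Equiv.coe_addRight]
  refine if_congr ?_ (by congr 2; omega) rfl
  constructor
  · rintro ⟨h1, h2, h3⟩
    exact ⟨by omega, fun u hu1 hu2 => h2 (u + t) (by omega) (by omega), h3⟩
  · rintro ⟨h1, h2, h3⟩
    refine ⟨by omega, fun u hu1 hu2 => ?_, h3⟩
    have h := h2 (u - t) (by omega) (by omega)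
    simpa using h

lemma pcondS_shift (t : ℤ) (a : Bool) (x : ℤ → I → Bool) :
    pcondS φ W g i t a x = pcondS φ W g i 0 a (fun s j => x (s + t) j) := by
  unfold pcondS spikePS
  rw [pot_shift]

lemma pcondS_mem (hφrange : ∀ i s, φ i s ∈ Set.Icc (0:ℝ) 1) (t : ℤ) (a : Bool)
    (x : ℤ → I → Bool) : pcondS φ W g i t a x ∈ Set.Icc (0:ℝ) 1 := by
  unfold pcondS spikePS
  rcases hφrange i (pot W g i t x) with ⟨h1, h2⟩
  cases a <;> constructor <;> simp <;> linarith

lemma pcondS_add (t : ℤ) (x : ℤ → I → Bool) :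
    pcondS φ W g i t true x + pcondS φ W g i t false x = 1 := by
  unfold pcondS
  simp

/-- the defining set of `rkS` -/
def rset (k : ℕ) (a : Bool) (x : ℤ → I → Bool) : Set ℝ :=
  {v | ∃ z : ℤ → I → Bool,
    (∀ j ∈ V i k, ∀ s : ℤ, -(k : ℤ) - 1 ≤ s → s ≤ -1 → z s j = x s j) ∧
    v = pcondS φ W g i 0 a z}

lemma rkS_eq (k : ℕ) (a : Bool) (x : ℤ → I → Bool) :
    rkS φ W g V i k a x = sInf (rset φ W g V i k a x) := rfl

lemma rset_nonempty (k : ℕ) (a : Bool) (x : ℤ → I → Bool) :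
    (rset φ W g V i k a x).Nonempty :=
  ⟨pcondS φ W g i 0 a x, x, fun _ _ _ _ _ => rfl, rfl⟩

lemma rset_bddBelow (hφrange : ∀ i s, φ i s ∈ Set.Icc (0:ℝ) 1) (k : ℕ) (a : Bool)
    (x : ℤ → I → Bool) : BddBelow (rset φ W g V i k a x) := by
  refine ⟨0, ?_⟩
  rintro v ⟨z, -, rfl⟩
  exact (pcondS_mem φ W g i hφrange 0 a z).1

lemma rkS_nonneg (hφrange : ∀ i s, φ i s ∈ Set.Icc (0:ℝ) 1) (k : ℕ) (a : Bool)
    (x : ℤ → I → Bool) : 0 ≤ rkS φ W g V i k a x := by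
  rw [rkS_eq]
  apply le_csInf (rset_nonempty φ W g V i k a x)
  rintro v ⟨z, -, rfl⟩
  exact (pcondS_mem φ W g i hφrange 0 a z).1

lemma rkS_le (hφrange : ∀ i s, φ i s ∈ Set.Icc (0:ℝ) 1) (k : ℕ) (a : Bool)
    (x : ℤ → I → Bool) : rkS φ W g V i k a x ≤ pcondS φ W g i 0 a x := by
  rw [rkS_eq]
  exact csInf_le (rset_bddBelow φ W g V i hφrange k a x)
    ⟨x, fun _ _ _ _ _ => rfl, rfl⟩

lemma rkS_mono (hφrange : ∀ i s, φ i s ∈ Set.Icc (0:ℝ) 1) (hVmono : ∀ i, Monotone (V i))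
    {k k' : ℕ} (hkk : k ≤ k') (a : Bool) (x : ℤ → I → Bool) :
    rkS φ W g V i k a x ≤ rkS φ W g V i k' a x := by
  rw [rkS_eq, rkS_eq]
  apply csInf_le_csInf (rset_bddBelow φ W g V i hφrange k a x)
    (rset_nonempty φ W g V i k' a x)
  rintro v ⟨z, hz, rfl⟩
  refine ⟨z, fun j hj s hs1 hs2 => ?_, rfl⟩
  exact hz j (hVmono i hkk hj) s (by push_cast; omega) hs2

lemma rnegS_nonneg (hφrange : ∀ i s, φ i s ∈ Set.Icc (0:ℝ) 1) (a : Bool) :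
    0 ≤ rnegS φ W g i a := by
  apply le_csInf (Set.range_nonempty _)
  rintro v ⟨z, rfl⟩
  exact (pcondS_mem φ W g i hφrange 0 a z).1

lemma rnegS_le (hφrange : ∀ i s, φ i s ∈ Set.Icc (0:ℝ) 1) (a : Bool) (z : ℤ → I → Bool) :
    rnegS φ W g i a ≤ pcondS φ W g i 0 a z :=
  csInf_le ⟨0, by rintro v ⟨y, rfl⟩; exact (pcondS_mem φ W g i hφrange 0 a y).1⟩ ⟨z, rfl⟩

lemma rnegS_le_rkS (hφrange : ∀ i s, φ i s ∈ Set.Icc (0:ℝ) 1) (k : ℕ) (a : Bool)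
    (x : ℤ → I → Bool) : rnegS φ W g i a ≤ rkS φ W g V i k a x := by
  rw [rkS_eq]
  apply le_csInf (rset_nonempty φ W g V i k a x)
  rintro v ⟨z, -, rfl⟩
  exact rnegS_le φ W g i hφrange a z

lemma rkS_congr (k : ℕ) (a : Bool) {x y : ℤ → I → Bool}
    (hxy : ∀ j ∈ V i k, ∀ s : ℤ, -(k : ℤ) - 1 ≤ s → s ≤ -1 → x s j = y s j) :
    rkS φ W g V i k a x = rkS φ W g V i k a y := by
  rw [rkS_eq, rkS_eq]
  congr 1
  unfold rset
  ext v
  constructor <;> rintro ⟨z, hz, rfl⟩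
  · exact ⟨z, fun j hj s h1 h2 => (hz j hj s h1 h2).trans (hxy j hj s h1 h2), rfl⟩
  · exact ⟨z, fun j hj s h1 h2 => (hz j hj s h1 h2).trans (hxy j hj s h1 h2).symm, rfl⟩

lemma alpS_bddBelow0 (hφrange : ∀ i s, φ i s ∈ Set.Icc (0:ℝ) 1) (k : ℕ) :
    BddBelow (Set.range (fun x => rkS φ W g V i k true x + rkS φ W g V i k false x)) := by
  refine ⟨0, ?_⟩
  rintro v ⟨x, rfl⟩
  exact add_nonneg (rkS_nonneg φ W g V i hφrange k true x)
    (rkS_nonneg φ W g V i hφrange k false x)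

lemma alpS_le_one (hφrange : ∀ i s, φ i s ∈ Set.Icc (0:ℝ) 1) (k : ℕ) :
    alpS φ W g V i k ≤ 1 := by
  unfold alpS
  refine csInf_le_of_le (alpS_bddBelow0 φ W g V i hφrange k) ⟨(fun _ _ => false), rfl⟩ ?_
  calc rkS φ W g V i k true (fun _ _ => false) + rkS φ W g V i k false (fun _ _ => false)
      ≤ pcondS φ W g i 0 true (fun _ _ => false) + pcondS φ W g i 0 false (fun _ _ => false) :=
        add_le_add (rkS_le φ W g V i hφrange k true _) (rkS_le φ W g V i hφrange k false _)
    _ = 1 := pcondS_add φ W g i 0 _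

lemma alpS_nonneg (hφrange : ∀ i s, φ i s ∈ Set.Icc (0:ℝ) 1) (k : ℕ) :
    0 ≤ alpS φ W g V i k := by
  unfold alpS
  apply le_csInf (Set.range_nonempty _)
  rintro v ⟨x, rfl⟩
  exact add_nonneg (rkS_nonneg φ W g V i hφrange k true x)
    (rkS_nonneg φ W g V i hφrange k false x)

lemma alpS_le (hφrange : ∀ i s, φ i s ∈ Set.Icc (0:ℝ) 1) (k : ℕ) (x : ℤ → I → Bool) :
    alpS φ W g V i k ≤ rkS φ W g V i k true x + rkS φ W g V i k false x :=
  csInf_le (alpS_bddBelow0 φ W g V i hφrange k) ⟨x, rfl⟩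

lemma alpS_mono (hφrange : ∀ i s, φ i s ∈ Set.Icc (0:ℝ) 1) (hVmono : ∀ i, Monotone (V i))
    {k k' : ℕ} (hkk : k ≤ k') : alpS φ W g V i k ≤ alpS φ W g V i k' := by
  unfold alpS
  apply le_csInf (Set.range_nonempty _)
  rintro v ⟨x, rfl⟩
  exact (alpS_le φ W g V i hφrange k x).trans
    (add_le_add (rkS_mono φ W g V i hφrange hVmono hkk true x)
      (rkS_mono φ W g V i hφrange hVmono hkk false x))

lemma lamNegS_nonneg (hφrange : ∀ i s, φ i s ∈ Set.Icc (0:ℝ) 1) :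
    0 ≤ lamNegS φ W g i :=
  add_nonneg (rnegS_nonneg φ W g i hφrange true) (rnegS_nonneg φ W g i hφrange false)

lemma lamNegS_le_one (hφrange : ∀ i s, φ i s ∈ Set.Icc (0:ℝ) 1) :
    lamNegS φ W g i ≤ 1 := by
  unfold lamNegS
  calc rnegS φ W g i true + rnegS φ W g i false
      ≤ pcondS φ W g i 0 true (fun _ _ => false) + pcondS φ W g i 0 false (fun _ _ => false) :=
        add_le_add (rnegS_le φ W g i hφrange true _) (rnegS_le φ W g i hφrange false _)
    _ = 1 := pcondS_add φ W g i 0 _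

lemma lamNegS_le_alpS (hφrange : ∀ i s, φ i s ∈ Set.Icc (0:ℝ) 1) (k : ℕ) :
    lamNegS φ W g i ≤ alpS φ W g V i k := by
  unfold alpS lamNegS
  apply le_csInf (Set.range_nonempty _)
  rintro v ⟨x, rfl⟩
  exact add_le_add (rnegS_le_rkS φ W g V i hφrange k true x)
    (rnegS_le_rkS φ W g V i hφrange k false x)

lemma lamS_nonneg (hφrange : ∀ i s, φ i s ∈ Set.Icc (0:ℝ) 1)
    (hVmono : ∀ i, Monotone (V i)) (k : ℕ) : 0 ≤ lamS φ W g V i k := by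
  cases k with
  | zero => simpa [lamS] using lamNegS_le_alpS φ W g V i hφrange 0
  | succ k => simpa [lamS] using alpS_mono φ W g V i hφrange hVmono (Nat.le_succ k)

lemma lamS_le_one (hφrange : ∀ i s, φ i s ∈ Set.Icc (0:ℝ) 1)
    (hVmono : ∀ i, Monotone (V i)) (k : ℕ) : lamS φ W g V i k ≤ 1 := by
  cases k with
  | zero =>
    have := alpS_le_one φ W g V i hφrange 0
    have := lamNegS_nonneg φ W g i hφrange
    simp only [lamS]; linarith
  | succ k =>
    have := alpS_le_one φ W g V i hφrange (k+1)
    have := alpS_nonneg φ W g V i hφrange k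
    simp only [lamS]; linarith

lemma sum_range_lamS (K : ℕ) :
    ∑ k ∈ Finset.range (K + 1), lamS φ W g V i k = alpS φ W g V i K - lamNegS φ W g i := by
  induction K with
  | zero => simp [lamS]
  | succ K ih => rw [Finset.sum_range_succ, ih]; simp only [lamS]; ring

end PartE


section PartF

open NeuronSys

variable {I : Type*} [DecidableEq I] (φ : I → ℝ → ℝ) (W : I → I → ℝ) (g : I → ℕ → ℝ)
  (V : I → ℕ → Finset I) (i : I) (γ : ℝ)

lemma rkS_ge (hφrange : ∀ i s, φ i s ∈ Set.Icc (0:ℝ) 1)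
    (hφLip : ∀ i s s', |φ i s - φ i s'| ≤ γ * |s - s'|) (hγ : 0 < γ)
    (hg : ∀ j, Summable (g j)) (hgpos : ∀ j n, 0 ≤ g j n) (hCW : CW W g i ≠ ⊤)
    (hV0 : ∀ i, V i 0 = {i}) (hVmono : ∀ i, Monotone (V i))
    (k : ℕ) (hbr : brE W g V i k ≠ ⊤) (a : Bool) (x : ℤ → I → Bool) :
    pcondS φ W g i 0 a x - γ * (brE W g V i k).toReal ≤ rkS φ W g V i k a x := by
  rw [rkS_eq]
  apply le_csInf (rset_nonempty φ W g V i k a x)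
  rintro v ⟨z, hz, rfl⟩
  have hd : |pot W g i 0 z - pot W g i 0 x| ≤ (brE W g V i k).toReal := by
    have h1 := pot_diff_le W g V i hg hgpos hCW hV0 hVmono k x z hz
    have h2 := ENNReal.toReal_mono hbr h1
    rwa [ENNReal.toReal_ofReal (abs_nonneg _)] at h2
  have hlip : |pcondS φ W g i 0 a z - pcondS φ W g i 0 a x| ≤ γ * (brE W g V i k).toReal := by
    have hphi : |φ i (pot W g i 0 z) - φ i (pot W g i 0 x)| ≤ γ * (brE W g V i k).toReal :=
      (hφLip i _ _).trans (mul_le_mul_of_nonneg_left hd hγ.le)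
    cases a
    · simp only [pcondS, spikePS, if_neg (by simp : ¬ (false : Bool) = true)]
      rw [show (1 - φ i (pot W g i 0 z)) - (1 - φ i (pot W g i 0 x))
        = -(φ i (pot W g i 0 z) - φ i (pot W g i 0 x)) by ring, abs_neg]
      exact hphi
    · simpa [pcondS, spikePS] using hphi
  have := (abs_le.1 hlip).1
  linarith

lemma alpS_ge (hφrange : ∀ i s, φ i s ∈ Set.Icc (0:ℝ) 1)
    (hφLip : ∀ i s s', |φ i s - φ i s'| ≤ γ * |s - s'|) (hγ : 0 < γ)
    (hg : ∀ j, Summable (g j)) (hgpos : ∀ j n, 0 ≤ g j n) (hCW : CW W g i ≠ ⊤)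
    (hV0 : ∀ i, V i 0 = {i}) (hVmono : ∀ i, Monotone (V i))
    (k : ℕ) (hbr : brE W g V i k ≠ ⊤) :
    1 - 2 * (γ * (brE W g V i k).toReal) ≤ alpS φ W g V i k := by
  unfold alpS
  apply le_csInf (Set.range_nonempty _)
  rintro v ⟨x, rfl⟩
  dsimp only
  have h1 := rkS_ge φ W g V i γ hφrange hφLip hγ hg hgpos hCW hV0 hVmono k hbr true x
  have h2 := rkS_ge φ W g V i γ hφrange hφLip hγ hg hgpos hCW hV0 hVmono k hbr false x
  have h3 := pcondS_add φ W g i 0 x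
  linarith

/-- the cumulative guaranteed mass for symbol `1` -/
def mseq : ℕ → (ℤ → I → Bool) → ℝ
  | 0, x => max (rnegS φ W g i true) (alpS φ W g V i 0 - rkS φ W g V i 0 false x)
  | (k+1), x => max (mseq k x) (alpS φ W g V i (k+1) - rkS φ W g V i (k+1) false x)

/-- previous value of `mseq` (with `rnegS` at `-1`) -/
def mprev : ℕ → (ℤ → I → Bool) → ℝ
  | 0, _ => rnegS φ W g i true
  | (k+1), x => mseq φ W g V i k x

lemma le_mseq (k : ℕ) (x : ℤ → I → Bool) :
    alpS φ W g V i k - rkS φ W g V i k false x ≤ mseq φ W g V i k x := by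
  cases k <;> exact le_max_right _ _

lemma mprev_le_mseq (k : ℕ) (x : ℤ → I → Bool) :
    mprev φ W g V i k x ≤ mseq φ W g V i k x := by
  cases k <;> exact le_max_left _ _

lemma mseq_le (hφrange : ∀ i s, φ i s ∈ Set.Icc (0:ℝ) 1) (k : ℕ) (x : ℤ → I → Bool) :
    mseq φ W g V i k x ≤ pcondS φ W g i 0 true x := by
  induction k with
  | zero =>
    apply max_le
    · exact (rnegS_le_rkS φ W g V i hφrange 0 true x).trans (rkS_le φ W g V i hφrange 0 true x)
    · have h1 := alpS_le φ W g V i hφrange 0 x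
      have h2 := rkS_le φ W g V i hφrange 0 true x
      linarith
  | succ k ih =>
    apply max_le ih
    have h1 := alpS_le φ W g V i hφrange (k+1) x
    have h2 := rkS_le φ W g V i hφrange (k+1) true x
    linarith

lemma mseq_sub_mprev_le (hφrange : ∀ i s, φ i s ∈ Set.Icc (0:ℝ) 1)
    (hVmono : ∀ i, Monotone (V i)) (k : ℕ) (x : ℤ → I → Bool) :
    mseq φ W g V i k x - mprev φ W g V i k x ≤ lamS φ W g V i k := by
  cases k with
  | zero =>
    have h1 : rnegS φ W g i false ≤ rkS φ W g V i 0 false x :=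
      rnegS_le_rkS φ W g V i hφrange 0 false x
    have h2 := lamNegS_le_alpS φ W g V i hφrange 0
    unfold lamNegS at h2
    simp only [mseq, mprev, lamS]
    rw [sub_le_iff_le_add]
    apply max_le <;> unfold lamNegS <;> linarith
  | succ k =>
    have h1 : rkS φ W g V i k false x ≤ rkS φ W g V i (k+1) false x :=
      rkS_mono φ W g V i hφrange hVmono (Nat.le_succ k) false x
    have h2 := le_mseq φ W g V i k x
    have h3 := alpS_mono φ W g V i hφrange hVmono (Nat.le_succ k)
    simp only [mseq, mprev, lamS]
    rw [sub_le_iff_le_add]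
    apply max_le <;> linarith

lemma mseq_ge_lower (hφrange : ∀ i s, φ i s ∈ Set.Icc (0:ℝ) 1) (k : ℕ) (x : ℤ → I → Bool) :
    alpS φ W g V i k - 1 + pcondS φ W g i 0 true x ≤ mseq φ W g V i k x := by
  have h1 := le_mseq φ W g V i k x
  have h2 := rkS_le φ W g V i hφrange k false x
  have h3 := pcondS_add φ W g i 0 x
  linarith

lemma agree_mono (hVmono : ∀ i, Monotone (V i)) {l k : ℕ} (hlk : l ≤ k)
    {x y : ℤ → I → Bool}
    (h : ∀ j ∈ V i k, ∀ s : ℤ, -(k : ℤ) - 1 ≤ s → s ≤ -1 → x s j = y s j) :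
    ∀ j ∈ V i l, ∀ s : ℤ, -(l : ℤ) - 1 ≤ s → s ≤ -1 → x s j = y s j := by
  intro j hj s h1 h2
  exact h j (hVmono i hlk hj) s (by push_cast; omega) h2

lemma mseq_congr (hVmono : ∀ i, Monotone (V i)) (k : ℕ) {x y : ℤ → I → Bool}
    (hxy : ∀ j ∈ V i k, ∀ s : ℤ, -(k : ℤ) - 1 ≤ s → s ≤ -1 → x s j = y s j) :
    mseq φ W g V i k x = mseq φ W g V i k y := by
  induction k with
  | zero => simp only [mseq]; rw [rkS_congr φ W g V i 0 false hxy]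
  | succ k ih =>
    simp only [mseq]
    rw [rkS_congr φ W g V i (k+1) false hxy,
      ih (agree_mono V i hVmono (Nat.le_succ k) hxy)]

lemma sum_range_mseq (K : ℕ) (x : ℤ → I → Bool) :
    ∑ k ∈ Finset.range (K + 1), (mseq φ W g V i k x - mprev φ W g V i k x)
      = mseq φ W g V i K x - rnegS φ W g i true := by
  induction K with
  | zero => simp [mprev]
  | succ K ih => rw [Finset.sum_range_succ, ih]; simp only [mprev]; ring

/-- the factors `p^{[k]}` of the decomposition, at time 0 -/
def qfun (k : ℕ) (a : Bool) (x : ℤ → I → Bool) : ℝ :=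
  if a then (if lamS φ W g V i k = 0 then 0
    else (mseq φ W g V i k x - mprev φ W g V i k x) / lamS φ W g V i k)
  else 1 - (if lamS φ W g V i k = 0 then 0
    else (mseq φ W g V i k x - mprev φ W g V i k x) / lamS φ W g V i k)

lemma qfun_true_eq (k : ℕ) (x : ℤ → I → Bool) :
    qfun φ W g V i k true x = (if lamS φ W g V i k = 0 then 0
      else (mseq φ W g V i k x - mprev φ W g V i k x) / lamS φ W g V i k) := rfl

lemma qfun_false_eq (k : ℕ) (x : ℤ → I → Bool) :
    qfun φ W g V i k false x = 1 - (if lamS φ W g V i k = 0 then 0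
      else (mseq φ W g V i k x - mprev φ W g V i k x) / lamS φ W g V i k) := rfl

lemma qfun_true_mem (hφrange : ∀ i s, φ i s ∈ Set.Icc (0:ℝ) 1)
    (hVmono : ∀ i, Monotone (V i)) (k : ℕ) (x : ℤ → I → Bool) :
    qfun φ W g V i k true x ∈ Set.Icc (0:ℝ) 1 := by
  rw [qfun_true_eq]
  by_cases h : lamS φ W g V i k = 0
  · rw [if_pos h]; exact ⟨le_refl 0, zero_le_one⟩
  · rw [if_neg h]
    have hpos : 0 < lamS φ W g V i k :=
      lt_of_le_of_ne (lamS_nonneg φ W g V i hφrange hVmono k) (Ne.symm h)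
    constructor
    · exact div_nonneg (by linarith [mprev_le_mseq φ W g V i k x]) hpos.le
    · rw [div_le_one hpos]
      exact mseq_sub_mprev_le φ W g V i hφrange hVmono k x

lemma qfun_add (k : ℕ) (x : ℤ → I → Bool) :
    qfun φ W g V i k false x + qfun φ W g V i k true x = 1 := by
  rw [qfun_true_eq, qfun_false_eq]
  ring

lemma lamS_mul_qfun (hφrange : ∀ i s, φ i s ∈ Set.Icc (0:ℝ) 1)
    (hVmono : ∀ i, Monotone (V i)) (k : ℕ) (x : ℤ → I → Bool) :
    lamS φ W g V i k * qfun φ W g V i k true x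
      = mseq φ W g V i k x - mprev φ W g V i k x := by
  rw [qfun_true_eq]
  by_cases h : lamS φ W g V i k = 0
  · rw [if_pos h, h, zero_mul]
    have h1 := mseq_sub_mprev_le φ W g V i hφrange hVmono k x
    have h2 := mprev_le_mseq φ W g V i k x
    rw [h] at h1
    linarith
  · rw [if_neg h, mul_div_cancel₀ _ h]

lemma mprev_congr (hVmono : ∀ i, Monotone (V i)) (k : ℕ) {x y : ℤ → I → Bool}
    (hxy : ∀ j ∈ V i k, ∀ s : ℤ, -(k : ℤ) - 1 ≤ s → s ≤ -1 → x s j = y s j) :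
    mprev φ W g V i k x = mprev φ W g V i k y := by
  cases k with
  | zero => rfl
  | succ k =>
    simp only [mprev]
    exact mseq_congr φ W g V i hVmono k (agree_mono V i hVmono (Nat.le_succ k) hxy)

lemma qfun_congr (hVmono : ∀ i, Monotone (V i)) (k : ℕ) (a : Bool) {x y : ℤ → I → Bool}
    (hxy : ∀ j ∈ V i k, ∀ s : ℤ, -(k : ℤ) - 1 ≤ s → s ≤ -1 → x s j = y s j) :
    qfun φ W g V i k a x = qfun φ W g V i k a y := by
  unfold qfun
  rw [mseq_congr φ W g V i hVmono k hxy, mprev_congr φ W g V i hVmono k hxy]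

end PartF

end KalAux

open scoped Topology

/-- **Proposition 2 (Space-time Kalikow-type decomposition).** Under the summability of
the weights, the uniform Lipschitz condition and the space-time summability condition,
the weights `λ_i(k)`, `k ≥ -1`, lie in `[0,1]` and sum to `1`, and for every `(i,t)` there
is a family `(p^{[k]}_{(i,t)}(a|·))_{k≥0}` of conditional probabilities such that
`p^{[0]}(a|x)` depends only on `x_{t-1}(i)`, `p^{[k]}(a|x)` depends only on
`(x_s(j) : t-k-1 ≤ s ≤ t-1, j ∈ V_i(k))` for `k ≥ 1`, and
`p_{(i,t)}(a|x) = λ_i(-1) p^{[-1]}(a) + ∑_{k≥0} λ_i(k) p^{[k]}(a|x)` with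
`p^{[-1]}(a) = r_i^{[-1]}(a)/λ_i(-1)`. -/
theorem spacetime_kalikow_decomposition
    {I : Type*} [Countable I] [Nonempty I] [DecidableEq I]
    (W : I → I → ℝ) (g : I → ℕ → ℝ) (V : I → ℕ → Finset I)
    (γ : ℝ) (φ : I → ℝ → ℝ)
    (hWdiag : ∀ j, W j j = 0)
    (hgpos : ∀ j n, 0 ≤ g j n)
    (hgsum : ∀ j, Summable (g j))
    (hγ : 0 < γ)
    (hWsum : (⨆ i : I, ∑' j : I, ENNReal.ofReal |W j i|) < ⊤)
    (hV0 : ∀ i, V i 0 = {i})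
    (hVmono : ∀ i, Monotone (V i))
    (hVunion : ∀ i, (⋃ k, (V i k : Set I)) = {j | j ≠ i ∧ W j i ≠ 0} ∪ {i})
    (hφrange : ∀ i s, φ i s ∈ Set.Icc (0:ℝ) 1)
    (hφLip : ∀ i s s', |φ i s - φ i s'| ≤ γ * |s - s'|)
    (hmain : (⨆ i : I, ∑' k : ℕ, ((k : ℝ≥0∞) + 1) * ((V i k).card : ℝ≥0∞) *
        ((∑' j : I, (if j ∈ (if k = 0 then (∅ : Finset I) else V i (k-1)) then 0
            else ENNReal.ofReal |W j i| *
              ∑' n : ℕ, if 1 ≤ n then ENNReal.ofReal (g j n) else 0))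
         + ∑' j : I, (if j ∈ (if k = 0 then (∅ : Finset I) else V i (k-1)) then
              ENNReal.ofReal |W j i| *
                ∑' n : ℕ, (if max k 1 ≤ n then ENNReal.ofReal (g j n) else 0)
            else 0)))
      < ENNReal.ofReal (1/γ)) :
    (∀ i : I,
      lamNegS φ W g i ∈ Set.Icc (0:ℝ) 1 ∧
      (∀ k : ℕ, lamS φ W g V i k ∈ Set.Icc (0:ℝ) 1) ∧
      lamNegS φ W g i + ∑' k : ℕ, lamS φ W g V i k = 1) ∧
    ∀ (i : I) (t : ℤ), ∃ p : ℕ → Bool → (ℤ → I → Bool) → ℝ,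
      -- (1) p^{[0]}(a|·) depends only on x_{t-1}(i)
      (∀ (a : Bool) (x y : ℤ → I → Bool), x (t-1) i = y (t-1) i → p 0 a x = p 0 a y) ∧
      -- (2) for k ≥ 1, p^{[k]}(a|·) depends only on (x_s(j) : t-k-1 ≤ s ≤ t-1, j ∈ V_i(k))
      (∀ (k : ℕ), 1 ≤ k → ∀ (a : Bool) (x y : ℤ → I → Bool),
        (∀ j ∈ V i k, ∀ s : ℤ, t - (k : ℤ) - 1 ≤ s → s ≤ t - 1 → x s j = y s j) →
        p k a x = p k a y) ∧
      -- (3) p^{[k]}(·|x) is a probability on {0,1}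
      (∀ (k : ℕ) (x : ℤ → I → Bool),
        p k true x ∈ Set.Icc (0:ℝ) 1 ∧ p k false x + p k true x = 1) ∧
      -- (4) the convex decomposition of p_{(i,t)}(a|x)
      (∀ (x : ℤ → I → Bool) (a : Bool),
        pcondS φ W g i t a x
          = lamNegS φ W g i * (rnegS φ W g i a / lamNegS φ W g i)
            + ∑' k : ℕ, lamS φ W g V i k * p k a x) := by
  classical
  have hts : ∀ i : I, (∑' k : ℕ, ((k : ℝ≥0∞) + 1) * ((V i k).card : ℝ≥0∞) *
      ((∑' j : I, (if j ∈ (if k = 0 then (∅ : Finset I) else V i (k-1)) then 0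
          else ENNReal.ofReal |W j i| *
            ∑' n : ℕ, if 1 ≤ n then ENNReal.ofReal (g j n) else 0))
       + ∑' j : I, (if j ∈ (if k = 0 then (∅ : Finset I) else V i (k-1)) then
            ENNReal.ofReal |W j i| *
              ∑' n : ℕ, (if max k 1 ≤ n then ENNReal.ofReal (g j n) else 0)
          else 0))) ≠ ⊤ := by
    intro i
    exact ne_top_of_le_ne_top (hmain.trans_le le_top).ne
      (le_iSup (fun i : I => ∑' k : ℕ, ((k : ℝ≥0∞) + 1) * ((V i k).card : ℝ≥0∞) *
        ((∑' j : I, (if j ∈ (if k = 0 then (∅ : Finset I) else V i (k-1)) then 0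
            else ENNReal.ofReal |W j i| *
              ∑' n : ℕ, if 1 ≤ n then ENNReal.ofReal (g j n) else 0))
         + ∑' j : I, (if j ∈ (if k = 0 then (∅ : Finset I) else V i (k-1)) then
              ENNReal.ofReal |W j i| *
                ∑' n : ℕ, (if max k 1 ≤ n then ENNReal.ofReal (g j n) else 0)
            else 0))) i)
  have hA : ∀ i : I, KalAux.CW W g i ≤ ∑' k : ℕ, ((k : ℝ≥0∞) + 1) * ((V i k).card : ℝ≥0∞) *
      ((∑' j : I, (if j ∈ (if k = 0 then (∅ : Finset I) else V i (k-1)) then 0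
          else ENNReal.ofReal |W j i| *
            ∑' n : ℕ, if 1 ≤ n then ENNReal.ofReal (g j n) else 0))
       + ∑' j : I, (if j ∈ (if k = 0 then (∅ : Finset I) else V i (k-1)) then
            ENNReal.ofReal |W j i| *
              ∑' n : ℕ, (if max k 1 ≤ n then ENNReal.ofReal (g j n) else 0)
          else 0)) := by
    intro i
    refine le_trans ?_ (ENNReal.le_tsum 0)
    simp only [Nat.cast_zero, zero_add, eq_self_iff_true, ite_true, Finset.notMem_empty,
      ite_false, one_mul, hV0 i, Finset.card_singleton, Nat.cast_one, tsum_zero, add_zero]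
    exact le_rfl
  have hCW : ∀ i : I, KalAux.CW W g i ≠ ⊤ := by
    intro i
    exact (lt_of_le_of_lt (hA i) (lt_top_iff_ne_top.2 (hts i))).ne
  have hB : ∀ (i : I) (k : ℕ), KalAux.brE W g V i k ≤
      (((k+1 : ℕ) : ℝ≥0∞) + 1) * ((V i (k+1)).card : ℝ≥0∞) *
      ((∑' j : I, (if j ∈ (if k+1 = 0 then (∅ : Finset I) else V i (k+1-1)) then 0
          else ENNReal.ofReal |W j i| *
            ∑' n : ℕ, if 1 ≤ n then ENNReal.ofReal (g j n) else 0))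
       + ∑' j : I, (if j ∈ (if k+1 = 0 then (∅ : Finset I) else V i (k+1-1)) then
            ENNReal.ofReal |W j i| *
              ∑' n : ℕ, (if max (k+1) 1 ≤ n then ENNReal.ofReal (g j n) else 0)
          else 0)) := by
    intro i k
    have hi : i ∈ V i (k+1) := by
      have h := hVmono i (Nat.zero_le (k+1))
      rw [hV0 i] at h
      exact h (Finset.mem_singleton_self i)
    have hcard : (1 : ℝ≥0∞) ≤ ((V i (k+1)).card : ℝ≥0∞) := by
      rw [show (1 : ℝ≥0∞) = ((1 : ℕ) : ℝ≥0∞) by simp, Nat.cast_le]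
      exact Finset.card_pos.2 ⟨i, hi⟩
    rw [show (if k + 1 = 0 then (∅ : Finset I) else V i (k+1-1)) = V i k by simp]
    rw [show max (k+1) 1 = k + 1 from max_eq_left (by omega)]
    refine le_trans ?_ (le_mul_of_one_le_left zero_le ?_)
    · rw [KalAux.brE, ← ENNReal.tsum_add]
      apply ENNReal.tsum_le_tsum
      intro j
      by_cases hj : j ∈ V i k
      · simp only [if_pos hj, zero_add]
        exact le_rfl
      · simp only [if_neg hj, add_zero]
        exact le_rfl
    · calc (1 : ℝ≥0∞) = 1 * 1 := (one_mul 1).symm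
        _ ≤ (((k+1 : ℕ) : ℝ≥0∞) + 1) * ((V i (k+1)).card : ℝ≥0∞) :=
          mul_le_mul' (le_add_of_nonneg_left zero_le) hcard
  have hbrne : ∀ (i : I) (k : ℕ), KalAux.brE W g V i k ≠ ⊤ := by
    intro i k
    exact (lt_of_le_of_lt ((hB i k).trans (ENNReal.le_tsum (k+1)))
      (lt_top_iff_ne_top.2 (hts i))).ne
  have hbrtend : ∀ i : I, Tendsto (fun k => (KalAux.brE W g V i k).toReal) atTop (𝓝 0) := by
    intro i
    have h1 := ENNReal.tendsto_atTop_zero_of_tsum_ne_top (hts i)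
    have h2 := h1.comp (tendsto_add_atTop_nat 1)
    have h3 : Tendsto (fun k => KalAux.brE W g V i k) atTop (𝓝 0) :=
      tendsto_of_tendsto_of_tendsto_of_le_of_le tendsto_const_nhds h2
        (fun k => zero_le) (fun k => hB i k)
    have h4 := (ENNReal.tendsto_toReal (by simp : (0:ℝ≥0∞) ≠ ⊤)).comp h3
    simpa [Function.comp_def] using h4
  have halp : ∀ i : I, Tendsto (fun k => NeuronSys.alpS φ W g V i k) atTop (𝓝 1) := by
    intro i
    have hlow : Tendsto (fun k => 1 - 2*(γ * (KalAux.brE W g V i k).toReal)) atTop (𝓝 1) := by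
      have h1 := (((hbrtend i).const_mul γ).const_mul 2)
      have h2 := tendsto_const_nhds (X := ℝ) (f := atTop (α := ℕ)) (x := 1) |>.sub h1
      simpa using h2
    refine tendsto_of_tendsto_of_tendsto_of_le_of_le hlow tendsto_const_nhds
      (fun k => KalAux.alpS_ge φ W g V i γ hφrange hφLip hγ hgsum hgpos (hCW i)
        hV0 hVmono k (hbrne i k)) (fun k => KalAux.alpS_le_one φ W g V i hφrange k)
  have hlamsummable : ∀ i : I, Summable (NeuronSys.lamS φ W g V i) := by
    intro i
    apply summable_of_sum_range_le (c := 1)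
      (fun k => KalAux.lamS_nonneg φ W g V i hφrange hVmono k)
    intro n
    cases n with
    | zero => simp
    | succ K =>
      rw [KalAux.sum_range_lamS φ W g V i K]
      have h1 := KalAux.alpS_le_one φ W g V i hφrange K
      have h2 := KalAux.lamNegS_nonneg φ W g i hφrange
      linarith
  have hlamtsum : ∀ i : I, ∑' k, NeuronSys.lamS φ W g V i k = 1 - NeuronSys.lamNegS φ W g i := by
    intro i
    have h1 := (hlamsummable i).hasSum.tendsto_sum_nat
    have h2 := h1.comp (tendsto_add_atTop_nat 1)
    have h3 : Tendsto (fun K => ∑ k ∈ Finset.range (K + 1), NeuronSys.lamS φ W g V i k)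
        atTop (𝓝 (1 - NeuronSys.lamNegS φ W g i)) := by
      have h4 := (halp i).sub (tendsto_const_nhds (X := ℝ) (f := atTop (α := ℕ))
        (x := NeuronSys.lamNegS φ W g i))
      refine Tendsto.congr (fun K => (KalAux.sum_range_lamS φ W g V i K).symm) h4
    exact tendsto_nhds_unique h2 h3
  constructor
  · -- part 1
    intro i
    refine ⟨⟨KalAux.lamNegS_nonneg φ W g i hφrange, KalAux.lamNegS_le_one φ W g i hφrange⟩,
      fun k => ⟨KalAux.lamS_nonneg φ W g V i hφrange hVmono k,
        KalAux.lamS_le_one φ W g V i hφrange hVmono k⟩, ?_⟩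
    rw [hlamtsum i]
    ring
  · -- part 2
    intro i t
    refine ⟨fun k a x => KalAux.qfun φ W g V i k a (fun s j => x (s + t) j), ?_, ?_, ?_, ?_⟩
    · -- (1)
      intro a x y hxy
      apply KalAux.qfun_congr φ W g V i hVmono 0 a
      intro j hj s h1 h2
      rw [hV0 i, Finset.mem_singleton] at hj
      subst hj
      have hs : s = -1 := by push_cast at h1; omega
      subst hs
      rw [show (-1 : ℤ) + t = t - 1 by ring]
      exact hxy
    · -- (2)
      intro k hk a x y hxy
      apply KalAux.qfun_congr φ W g V i hVmono k a
      intro j hj s h1 h2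
      exact hxy j hj (s + t) (by omega) (by omega)
    · -- (3)
      intro k x
      exact ⟨KalAux.qfun_true_mem φ W g V i hφrange hVmono k _,
        KalAux.qfun_add φ W g V i k _⟩
    · -- (4)
      intro x a
      set x' : ℤ → I → Bool := fun s j => x (s + t) j with hx'
      have hshift : ∀ b : Bool, NeuronSys.pcondS φ W g i t b x = NeuronSys.pcondS φ W g i 0 b x' :=
        fun b => KalAux.pcondS_shift φ W g i t b x
      have hasD : ∀ k, NeuronSys.lamS φ W g V i k * KalAux.qfun φ W g V i k true x'
          = KalAux.mseq φ W g V i k x' - KalAux.mprev φ W g V i k x' :=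
        fun k => KalAux.lamS_mul_qfun φ W g V i hφrange hVmono k x'
      have hmt : Tendsto (fun K => KalAux.mseq φ W g V i K x') atTop
          (𝓝 (NeuronSys.pcondS φ W g i 0 true x')) := by
        have hlow : Tendsto (fun K => NeuronSys.alpS φ W g V i K - 1
            + NeuronSys.pcondS φ W g i 0 true x') atTop
            (𝓝 (NeuronSys.pcondS φ W g i 0 true x')) := by
          have h1 := ((halp i).sub (tendsto_const_nhds (x := (1:ℝ)))).add
            (tendsto_const_nhds (x := NeuronSys.pcondS φ W g i 0 true x'))
          simpa using h1
        exact tendsto_of_tendsto_of_tendsto_of_le_of_le hlow tendsto_const_nhds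
          (fun K => KalAux.mseq_ge_lower φ W g V i hφrange K x')
          (fun K => KalAux.mseq_le φ W g V i hφrange K x')
      have hDnonneg : ∀ k, 0 ≤ KalAux.mseq φ W g V i k x' - KalAux.mprev φ W g V i k x' :=
        fun k => by linarith [KalAux.mprev_le_mseq φ W g V i k x']
      have hsum2 : Summable (fun k => KalAux.mseq φ W g V i k x' - KalAux.mprev φ W g V i k x') := by
        apply summable_of_sum_range_le (c := 1) hDnonneg
        intro n
        cases n with
        | zero => simp
        | succ K =>
          rw [KalAux.sum_range_mseq φ W g V i K x']
          have h1 := KalAux.mseq_le φ W g V i hφrange K x'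
          have h2 := KalAux.rnegS_nonneg φ W g i hφrange true
          have h3 := (KalAux.pcondS_mem φ W g i hφrange 0 true x').2
          linarith
      have htsum2 : ∑' k, (KalAux.mseq φ W g V i k x' - KalAux.mprev φ W g V i k x')
          = NeuronSys.pcondS φ W g i 0 true x' - NeuronSys.rnegS φ W g i true := by
        have h1 := hsum2.hasSum.tendsto_sum_nat
        have h2 := h1.comp (tendsto_add_atTop_nat 1)
        have h3 : Tendsto (fun K => ∑ k ∈ Finset.range (K + 1),
            (KalAux.mseq φ W g V i k x' - KalAux.mprev φ W g V i k x')) atTop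
            (𝓝 (NeuronSys.pcondS φ W g i 0 true x' - NeuronSys.rnegS φ W g i true)) := by
          have h4 := hmt.sub (tendsto_const_nhds (x := NeuronSys.rnegS φ W g i true))
          exact Tendsto.congr (fun K => (KalAux.sum_range_mseq φ W g V i K x').symm) h4
        exact tendsto_nhds_unique h2 h3
      have hqsummable : Summable (fun k => NeuronSys.lamS φ W g V i k *
          KalAux.qfun φ W g V i k true x') := by
        refine hsum2.congr (fun k => (hasD k).symm)
      have hqtsum : ∑' k, NeuronSys.lamS φ W g V i k * KalAux.qfun φ W g V i k true x'
          = NeuronSys.pcondS φ W g i 0 true x' - NeuronSys.rnegS φ W g i true := by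
        rw [tsum_congr hasD, htsum2]
      have hlamneg : ∀ b : Bool, NeuronSys.lamNegS φ W g i *
          (NeuronSys.rnegS φ W g i b / NeuronSys.lamNegS φ W g i) = NeuronSys.rnegS φ W g i b := by
        intro b
        by_cases h0 : NeuronSys.lamNegS φ W g i = 0
        · have h1 := KalAux.rnegS_nonneg φ W g i hφrange true
          have h2 := KalAux.rnegS_nonneg φ W g i hφrange false
          have h3 : NeuronSys.rnegS φ W g i true + NeuronSys.rnegS φ W g i false = 0 := h0
          have h4 : NeuronSys.rnegS φ W g i b = 0 := by cases b <;> linarith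
          rw [h0, h4]
          simp
        · rw [mul_comm, div_mul_cancel₀ _ h0]
      cases a with
      | true =>
        rw [hshift true, hlamneg true, hqtsum]
        ring
      | false =>
        have hfalse : ∀ k, NeuronSys.lamS φ W g V i k * KalAux.qfun φ W g V i k false x'
            = NeuronSys.lamS φ W g V i k
              - (KalAux.mseq φ W g V i k x' - KalAux.mprev φ W g V i k x') := by
          intro k
          have h1 := KalAux.qfun_add φ W g V i k x'
          rw [show KalAux.qfun φ W g V i k false x' = 1 - KalAux.qfun φ W g V i k true x'
            by linarith, mul_sub, mul_one, hasD k]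
        have hftsum : ∑' k, NeuronSys.lamS φ W g V i k * KalAux.qfun φ W g V i k false x'
            = (1 - NeuronSys.lamNegS φ W g i)
              - (NeuronSys.pcondS φ W g i 0 true x' - NeuronSys.rnegS φ W g i true) := by
          rw [tsum_congr hfalse, Summable.tsum_sub (hlamsummable i) hsum2, hlamtsum i, htsum2]
        rw [hshift false, hlamneg false, hftsum]
        have hadd := KalAux.pcondS_add φ W g i 0 x'
        have hln : NeuronSys.lamNegS φ W g i
            = NeuronSys.rnegS φ W g i true + NeuronSys.rnegS φ W g i false := rfl
        linarith
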